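/- If w ∈ F(A) is right-positive and v ∈ F(A) is positive, then the product w·v is reduced as written: toWord(w·v) = toWord w ++ toWord v, and in particular |w·v| = |w| + |v|. -/

import Mathlib

namespace PositiveWords

variable {A : Type*} [DecidableEq A]

/-- The degree of a list of letters: +1 for each positive letter, −1 for each inverse letter. -/
def degree (t : List (A × Bool)) : ℤ :=
  (t.map fun p => if p.2 then (1 : ℤ) else -1).sum

/-- A positive element of the free group: every letter of its reduced word is positive. -/
def Positive (w : FreeGroup A) : Prop :=
  ∀ p ∈ w.toWord, p.2 = true

/-- A right-positive element: every suffix of its reduced word has nonnegative degree. -/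
def RightPositive (w : FreeGroup A) : Prop :=
  ∀ s t : List (A × Bool), w.toWord = s ++ t → 0 ≤ degree t

lemma reduce_eq_self_of_chain' {L : List (A × Bool)}
    (h : List.Chain' (fun a b => ¬(a.1 = b.1 ∧ a.2 = !b.2)) L) :
    FreeGroup.reduce L = L := by
  induction L with
  | nil => rfl
  | cons x L ih =>
    rw [FreeGroup.reduce.cons, ih h.tail]
    cases L with
    | nil => rfl
    | cons y t =>
      simp only
      rw [if_neg (List.isChain_cons_cons.1 h).1]

lemma exists_of_not_chain' {α : Type*} {P : α → α → Prop} :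
    ∀ {L : List α}, ¬ List.Chain' P L → ∃ s a b t, L = s ++ a :: b :: t ∧ ¬ P a b := by
  intro L
  induction L with
  | nil => intro h; exact absurd List.isChain_nil h
  | cons x L ih =>
    intro h
    cases L with
    | nil => exact absurd (List.isChain_singleton x) h
    | cons y t =>
      rw [List.Chain', List.isChain_cons_cons] at h
      by_cases hxy : P x y
      · have ht : ¬ List.Chain' P (y :: t) := fun hc => h ⟨hxy, hc⟩
        obtain ⟨s, a, b, u, hEq, hP⟩ := ih ht
        exact ⟨x :: s, a, b, u, by rw [hEq]; rfl, hP⟩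
      · exact ⟨[], x, y, t, rfl, hxy⟩

lemma chain'_toWord (w : FreeGroup A) :
    List.Chain' (fun a b : A × Bool => ¬(a.1 = b.1 ∧ a.2 = !b.2)) w.toWord := by
  by_contra h
  obtain ⟨s, a, b, t, hEq, hP⟩ := exists_of_not_chain' h
  rw [not_not] at hP
  obtain ⟨h1, h2⟩ := hP
  have hb : b = (a.1, !a.2) := by
    obtain ⟨x, c⟩ := a; obtain ⟨y, d⟩ := b
    simp only [Prod.mk.injEq] at h1 h2 ⊢
    exact ⟨h1.symm, by rw [h2, Bool.not_not]⟩
  have hred : FreeGroup.reduce w.toWord = s ++ (a.1, a.2) :: (a.1, !a.2) :: t := by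
    rw [FreeGroup.reduce_toWord, hEq, hb]
  exact FreeGroup.reduce.not hred

/-- If `w` is right-positive and `v` is positive, the product `w * v` is reduced as written. -/
theorem toWord_mul_of_rightPositive_positive (w v : FreeGroup A)
    (hw : RightPositive w) (hv : Positive v) :
    (w * v).toWord = w.toWord ++ v.toWord ∧
    (w * v).toWord.length = w.toWord.length + v.toWord.length := by
  have hchain : List.Chain' (fun a b : A × Bool => ¬(a.1 = b.1 ∧ a.2 = !b.2))
      (w.toWord ++ v.toWord) := by
    refine List.isChain_append.2 ⟨chain'_toWord w, chain'_toWord v, ?_⟩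
    intro x hx y hy
    -- x is the last letter of w.toWord, y the first of v.toWord
    have hy2 : y.2 = true := hv y (List.mem_of_mem_head? hy)
    have hx2 : x.2 = true := by
      have hne : w.toWord ≠ [] := by
        rintro hn; rw [hn] at hx; simp at hx
      have hlast : w.toWord = w.toWord.dropLast ++ [x] := by
        have := List.dropLast_append_getLast hne
        rw [List.getLast?_eq_getLast hne, Option.mem_def, Option.some_inj] at hx
        rw [← hx]; exact this.symm
      have := hw _ _ hlast
      by_contra hfx
      simp only [Bool.not_eq_true] at hfx
      simp [degree, hfx] at this
    rintro ⟨-, h2⟩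
    rw [hx2, hy2] at h2
    simp at h2
  have hmul : (w * v).toWord = w.toWord ++ v.toWord := by
    have : w * v = FreeGroup.mk (w.toWord ++ v.toWord) := by
      rw [← FreeGroup.mul_mk, FreeGroup.mk_toWord, FreeGroup.mk_toWord]
    rw [this, FreeGroup.toWord_mk, reduce_eq_self_of_chain' hchain]
  exact ⟨hmul, by rw [hmul, List.length_append]⟩

end PositiveWords
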